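/- Let 𝒜 be an abelian category and ℬ an additive full subcategory. Then (K^{+,b}(ℬ)/K^b(ℬ), K^{-,b}(ℬ)/K^b(ℬ)) is a stable t-structure in K^{∞,b}(ℬ)/K^b(ℬ). In particular, for every complex X of objects of ℬ with bounded homology, there is a triangle τ_{≥1}X → X → τ_{≤0}X → Σ(τ_{≥1}X) in the homotopy category, with τ_{≥1}X bounded below and τ_{≤0}X bounded above. -/

import Mathlib

open CategoryTheory Pretriangulated Limits

universe v u

variable (A : Type u) [Category.{v} A] [Abelian A]

/-- The homotopy category of unbounded cochain complexes over `A`. -/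
abbrev HtpyCat := HomotopyCategory A (ComplexShape.up ℤ)

variable {A}

/-- Complexes all of whose components belong to the class `P` of objects of `A`. -/
def withComponentsIn (P : Set A) : Set (HtpyCat A) :=
  {X | ∀ i : ℤ, X.as.X i ∈ P}

/-- `K^{∞,b}(P)`: complexes with components in `P` and bounded homology. -/
def Kinfb (P : Set A) : Set (HtpyCat A) :=
  {X | X ∈ withComponentsIn P ∧
    ∃ m n : ℤ, ∀ i : ℤ, (i < m ∨ n < i) → X.as.ExactAt i}

/-- `K^{+,b}(P)`: bounded below complexes with components in `P` and bounded homology. -/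
def Kplusb (P : Set A) : Set (HtpyCat A) :=
  {X | X ∈ Kinfb P ∧ ∃ n : ℤ, ∀ i : ℤ, i < n → IsZero (X.as.X i)}

/-- `K^{-,b}(P)`: bounded above complexes with components in `P` and bounded homology. -/
def Kminusb (P : Set A) : Set (HtpyCat A) :=
  {X | X ∈ Kinfb P ∧ ∃ n : ℤ, ∀ i : ℤ, n < i → IsZero (X.as.X i)}

/-- `K^b(P)`: bounded complexes with components in `P`. -/
def Kb (P : Set A) : Set (HtpyCat A) :=
  {X | X ∈ withComponentsIn P ∧ ∃ m n : ℤ, ∀ i : ℤ, (i < m ∨ n < i) → IsZero (X.as.X i)}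


section Aux

open ZeroObject


namespace StupidTrunc
variable (X : CochainComplex A ℤ) (p : ℤ → Prop) [DecidablePred p]

/-- brutal truncation -/
@[reducible] noncomputable def strunc : CochainComplex A ℤ where
  X i := if p i then X.X i else 0
  d i j := if h : p i ∧ p j then eqToHom (if_pos h.1) ≫ X.d i j ≫ eqToHom (if_pos h.2).symm else 0
  shape i j hij := by
    beta_reduce
    by_cases h : p i ∧ p j
    · rw [dif_pos h, X.shape i j hij]; simp
    · exact dif_neg h
  d_comp_d' i j k _ _ := by
    beta_reduce
    by_cases h : p i ∧ p j
    · by_cases h' : p j ∧ p k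
      · rw [dif_pos h, dif_pos h']
        simp
      · rw [dif_neg h', comp_zero]
    · rw [dif_neg h, zero_comp]

lemma strunc_d {a b : ℤ} (ha : p a) (hb : p b) :
    (strunc X p).d a b = eqToHom (if_pos ha) ≫ X.d a b ≫ eqToHom (if_pos hb).symm :=
  dif_pos ⟨ha, hb⟩

lemma strunc_d_eq_zero {a b : ℤ} (h : ¬ (p a ∧ p b)) : (strunc X p).d a b = 0 := dif_neg h

lemma isZero_strunc_X {i : ℤ} (h : ¬ p i) : IsZero ((strunc X p).X i) := by
  dsimp [strunc]
  rw [if_neg h]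
  exact isZero_zero A

/-- the iso on components in range -/
noncomputable def struncXIso {i : ℤ} (h : p i) : (strunc X p).X i ≅ X.X i := eqToIso (if_pos h)

lemma strunc_X_mem (P : Set A) (hP0 : ∀ Y : A, IsZero Y → Y ∈ P) (hX : ∀ i, X.X i ∈ P) (i : ℤ) :
    (strunc X p).X i ∈ P := by
  dsimp [strunc]
  split_ifs with h
  · exact hX i
  · exact hP0 _ (isZero_zero A)

/-- projection -/
noncomputable def struncπ (hp : ∀ i j : ℤ, i + 1 = j → p j → p i) : X ⟶ strunc X p where
  f i := if h : p i then eqToHom (if_pos h).symm else 0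
  comm' i j hij := by
    beta_reduce
    replace hij : i + 1 = j := hij
    by_cases hj : p j
    · have hi : p i := hp i j hij hj
      rw [dif_pos hi, dif_pos hj, strunc_d X p hi hj]
      simp
    · rw [strunc_d_eq_zero X p (fun h => hj h.2), comp_zero, dif_neg hj, comp_zero]

/-- inclusion -/
noncomputable def struncι (hp : ∀ i j : ℤ, i + 1 = j → p i → p j) : strunc X p ⟶ X where
  f i := if h : p i then eqToHom (if_pos h) else 0
  comm' i j hij := by
    beta_reduce
    replace hij : i + 1 = j := hij
    by_cases hi : p i
    · have hj : p j := hp i j hij hi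
      rw [dif_pos hi, dif_pos hj, strunc_d X p hi hj]
      simp
    · rw [strunc_d_eq_zero X p (fun h => hi h.1), zero_comp, dif_neg hi, zero_comp]

lemma strunc_exactAt {i : ℤ} (h1 : p (i - 1)) (h2 : p i) (h3 : p (i + 1))
    (hX : X.ExactAt i) : (strunc X p).ExactAt i := by
  rw [HomologicalComplex.exactAt_iff' _ (i - 1) i (i + 1) (by simp) (by simp)] at hX ⊢
  refine ShortComplex.exact_of_iso (ShortComplex.isoMk ((struncXIso X p h1).symm)
    ((struncXIso X p h2).symm) ((struncXIso X p h3).symm) ?_ ?_) hX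
  · dsimp [struncXIso]
    rw [HomologicalComplex.shortComplexFunctor'_obj_f, strunc_d X p h1 h2]
    simp
    exact (eqToHom_trans_assoc _ _ _).trans ((congrArg (· ≫ _) (eqToHom_refl _ _)).trans (Category.id_comp _))
  · dsimp [struncXIso]
    rw [HomologicalComplex.shortComplexFunctor'_obj_g, strunc_d X p h2 h3]
    simp
    exact (eqToHom_trans_assoc _ _ _).trans ((congrArg (· ≫ _) (eqToHom_refl _ _)).trans (Category.id_comp _))

lemma exactAt_of_isZero (K : CochainComplex A ℤ) {i : ℤ} (h : IsZero (K.X i)) : K.ExactAt i := by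
  rw [HomologicalComplex.exactAt_iff]
  exact ShortComplex.exact_of_isZero_X₂ _ h

end StupidTrunc

namespace StupidTrunc
variable (X : CochainComplex A ℤ)

/-- τ_{≥1} X -/
@[reducible] noncomputable def truncGE1 : CochainComplex A ℤ := strunc X (fun i => 1 ≤ i)
/-- τ_{≤0} X -/
@[reducible] noncomputable def truncLE0 : CochainComplex A ℤ := strunc X (fun i => i ≤ 0)

/-- inclusion τ_{≥1} X ⟶ X -/
noncomputable def ι1 : truncGE1 X ⟶ X := struncι X _ (fun i j hij hi => by omega)
/-- projection X ⟶ τ_{≤0} X -/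
noncomputable def π0 : X ⟶ truncLE0 X := struncπ X _ (fun i j hij hj => by omega)

/-- the degreewise split short exact sequence -/
noncomputable def trSC : ShortComplex (CochainComplex A ℤ) :=
  ShortComplex.mk (ι1 X) (π0 X) (by
    ext i
    dsimp [ι1, π0, struncι, struncπ]
    by_cases h : 1 ≤ i
    · rw [dif_neg (by omega : ¬ i ≤ 0), comp_zero]
    · rw [dif_neg h, zero_comp])

noncomputable def trSplitting (n : ℤ) :
    (((trSC X).map (HomologicalComplex.eval A _ n)).Splitting) where
  r := if h : 1 ≤ n then eqToHom (if_pos h).symm else 0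
  s := if h : n ≤ 0 then eqToHom (if_pos h) else 0
  f_r := by
    dsimp [trSC, ι1, struncι]
    split_ifs with h
    · simp [h]
      exact (eqToHom_trans _ _).trans (eqToHom_refl _ _)
    · exact (isZero_strunc_X X (fun i => 1 ≤ i) h).eq_of_src _ _
  s_g := by
    dsimp [trSC, π0, struncπ]
    split_ifs with h
    · simp [h]
      exact (eqToHom_trans _ _).trans (eqToHom_refl _ _)
    · exact (isZero_strunc_X X (fun i => i ≤ 0) h).eq_of_src _ _
  id := by
    dsimp [trSC, ι1, π0, struncι, struncπ]
    by_cases h : 1 ≤ n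
    · have h' : ¬ n ≤ 0 := by omega
      simp [h, h']
      erw [Limits.zero_comp, add_zero]
      exact (eqToHom_trans _ _).trans (eqToHom_refl _ _)
    · have h' : n ≤ 0 := by omega
      simp [h, h']
      exact (congrArg (· + _) Limits.zero_comp).trans ((zero_add _).trans ((eqToHom_trans _ _).trans (eqToHom_refl _ _)))

end StupidTrunc

namespace StupidTrunc

noncomputable def struncFactor {X Y : CochainComplex A ℤ} (φ : X ⟶ Y) (b : ℤ)
    (hb : ∀ i, b < i → IsZero (Y.X i)) : strunc X (fun i => i ≤ b) ⟶ Y where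
  f i := if h : i ≤ b then eqToHom (if_pos h) ≫ φ.f i else 0
  comm' i j hij := by
    beta_reduce
    replace hij : i + 1 = j := hij
    by_cases h : i ≤ b
    · by_cases h' : j ≤ b
      · rw [dif_pos h, dif_pos h', strunc_d X (fun k => k ≤ b) h h']
        simp [φ.comm i j]
      · exact (hb j (by omega)).eq_of_tgt _ _
    · rw [dif_neg h, strunc_d_eq_zero X (fun k => k ≤ b) (fun hh => h hh.1), zero_comp, zero_comp]

lemma struncFactor_fac {X Y : CochainComplex A ℤ} (φ : X ⟶ Y) (b : ℤ)
    (hb : ∀ i, b < i → IsZero (Y.X i)) :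
    struncπ X (fun i => i ≤ b) (fun i j hij hj => by omega) ≫ struncFactor φ b hb = φ := by
  ext i
  dsimp [struncπ, struncFactor]
  by_cases h : i ≤ b
  · rw [dif_pos h, dif_pos h]
    simp [struncXIso]
  · rw [dif_neg h, zero_comp]
    exact ((hb i (by omega)).eq_of_tgt _ _)

lemma triangle_mem (X : CochainComplex A ℤ) :
    Triangle.mk ((HomotopyCategory.quotient A (ComplexShape.up ℤ)).map (ι1 X))
      ((HomotopyCategory.quotient A (ComplexShape.up ℤ)).map (π0 X))
      ((HomotopyCategory.quotient A (ComplexShape.up ℤ)).map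
          (CochainComplex.homOfDegreewiseSplit (trSC X) (trSplitting X)) ≫
        ((HomotopyCategory.quotient A (ComplexShape.up ℤ)).commShiftIso (1 : ℤ)).hom.app
          (truncGE1 X)) ∈
      distTriang (HomotopyCategory A (ComplexShape.up ℤ)) := by
  refine (HomotopyCategory.distinguished_iff_iso_trianglehOfDegreewiseSplit _).2
    ⟨trSC X, trSplitting X, ⟨Iso.refl _⟩⟩

lemma exactAt_shift (K : CochainComplex A ℤ) (n i i' : ℤ) (h : n + i = i') :
    (K⟦n⟧).ExactAt i ↔ K.ExactAt i' := by
  rw [HomologicalComplex.exactAt_iff, HomologicalComplex.exactAt_iff]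
  exact ShortComplex.exact_iff_of_iso
    ((CochainComplex.shiftShortComplexFunctorIso A n i i' h).app K)

end StupidTrunc


lemma HtpyCat.shift_as (X : HtpyCat A) (n : ℤ) : (X⟦n⟧).as = X.as⟦n⟧ := by
  with_unfolding_all rfl

open StupidTrunc

end Aux

open StupidTrunc

/-- A stable t-structure `(U/C, V/C)` on the Verdier quotient of the full triangulated
subcategory of the homotopy category determined by `D` by the one determined by `C`,
expressed in the ambient homotopy category: `U` and `V` are shift-stable classes inside
`D` containing `C`; every morphism from `U` to `V` vanishes in the quotient, i.e.
factors through an object of `C`; and every object of `D` sits in a distinguished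
triangle with outer vertices in `U` and `V`. -/
def IsStableTStructureModOn (D C U V : Set (HtpyCat A)) : Prop :=
  C ⊆ U ∧ C ⊆ V ∧ U ⊆ D ∧ V ⊆ D ∧
  (∀ (n : ℤ) (X : HtpyCat A), X ∈ U → X⟦n⟧ ∈ U) ∧
  (∀ (n : ℤ) (X : HtpyCat A), X ∈ V → X⟦n⟧ ∈ V) ∧
  (∀ (X Y : HtpyCat A) (f : X ⟶ Y), X ∈ U → Y ∈ V →
    ∃ (Z : HtpyCat A) (a : X ⟶ Z) (b : Z ⟶ Y), Z ∈ C ∧ a ≫ b = f) ∧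
  (∀ X ∈ D, ∃ (B C' : HtpyCat A) (f : B ⟶ X) (g : X ⟶ C') (h : C' ⟶ B⟦(1 : ℤ)⟧),
    B ∈ U ∧ C' ∈ V ∧ Triangle.mk f g h ∈ distTriang (HtpyCat A))

/-- For any additive full subcategory `P` of an abelian category `A`, the pair
`(K^{+,b}(P)/K^b(P), K^{-,b}(P)/K^b(P))` is a stable t-structure in
`K^{∞,b}(P)/K^b(P)`; in particular every complex `X` with bounded homology sits in a
distinguished triangle whose outer vertices are a bounded below and a bounded above
complex (given by the brutal truncations `τ_{≥1} X` and `τ_{≤0} X`). -/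
theorem stableTStructure_Kplusb_Kminusb_mod_Kb
    (P : Set A)
    (hP0 : ∀ X : A, IsZero X → X ∈ P)
    (hPsum : ∀ X Y : A, X ∈ P → Y ∈ P → (X ⊞ Y) ∈ P) :
    IsStableTStructureModOn (Kinfb P) (Kb P) (Kplusb P) (Kminusb P) := by
  have hKbU : Kb P ⊆ Kplusb P := by
    rintro X ⟨hP, m, n, hz⟩
    exact ⟨⟨hP, m, n, fun i hi => exactAt_of_isZero _ (hz i hi)⟩,
      m, fun i hi => hz i (Or.inl hi)⟩
  have hKbV : Kb P ⊆ Kminusb P := by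
    rintro X ⟨hP, m, n, hz⟩
    exact ⟨⟨hP, m, n, fun i hi => exactAt_of_isZero _ (hz i hi)⟩,
      n, fun i hi => hz i (Or.inr hi)⟩
  refine ⟨hKbU, hKbV, fun X hX => hX.1, fun X hX => hX.1, ?_, ?_, ?_, ?_⟩
  · -- shift stability of Kplusb
    rintro n X ⟨⟨hP, m₀, n₀, hex⟩, a, ha⟩
    refine ⟨⟨fun i => ?_, m₀ - n, n₀ - n, fun i hi => ?_⟩, a - n, fun i hi => ?_⟩
    · rw [HtpyCat.shift_as]
      exact hP (i + n)
    · rw [HtpyCat.shift_as]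
      exact (exactAt_shift X.as n i (n + i) rfl).2 (hex (n + i) (by omega))
    · rw [HtpyCat.shift_as]
      exact ha (i + n) (by omega)
  · -- shift stability of Kminusb
    rintro n X ⟨⟨hP, m₀, n₀, hex⟩, a, ha⟩
    refine ⟨⟨fun i => ?_, m₀ - n, n₀ - n, fun i hi => ?_⟩, a - n, fun i hi => ?_⟩
    · rw [HtpyCat.shift_as]
      exact hP (i + n)
    · rw [HtpyCat.shift_as]
      exact (exactAt_shift X.as n i (n + i) rfl).2 (hex (n + i) (by omega))
    · rw [HtpyCat.shift_as]
      exact ha (i + n) (by omega)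
  · -- factorization through Kb
    rintro X Y f ⟨⟨hXP, mX, nX, hXex⟩, a, ha⟩ ⟨⟨hYP, mY, nY, hYex⟩, b, hb⟩
    obtain ⟨φ, hφ⟩ := (HomotopyCategory.quotient A (ComplexShape.up ℤ)).map_surjective
      (X := X.as) (Y := Y.as) f
    refine ⟨(HomotopyCategory.quotient A (ComplexShape.up ℤ)).obj
        (strunc X.as (fun i => i ≤ b)),
      (HomotopyCategory.quotient A (ComplexShape.up ℤ)).map
        (struncπ X.as (fun i => i ≤ b) (fun i j hij hj => by omega)),
      (HomotopyCategory.quotient A (ComplexShape.up ℤ)).map (struncFactor φ b hb),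
      ⟨fun i => strunc_X_mem X.as _ P hP0 hXP i, a, b, fun i hi => ?_⟩, ?_⟩
    · rcases hi with hi | hi
      · by_cases h : i ≤ b
        · exact (ha i hi).of_iso (struncXIso X.as _ h)
        · exact isZero_strunc_X X.as _ h
      · exact isZero_strunc_X X.as _ (by omega)
    · exact ((HomotopyCategory.quotient A (ComplexShape.up ℤ)).map_comp _ _).symm.trans (by rw [struncFactor_fac, hφ])
  · -- the distinguished triangle
    rintro X ⟨hP, m₀, n₀, hex⟩
    refine ⟨(HomotopyCategory.quotient A (ComplexShape.up ℤ)).obj (truncGE1 X.as),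
      (HomotopyCategory.quotient A (ComplexShape.up ℤ)).obj (truncLE0 X.as),
      (HomotopyCategory.quotient A (ComplexShape.up ℤ)).map (ι1 X.as),
      (HomotopyCategory.quotient A (ComplexShape.up ℤ)).map (π0 X.as),
      (HomotopyCategory.quotient A (ComplexShape.up ℤ)).map
          (CochainComplex.homOfDegreewiseSplit (trSC X.as) (trSplitting X.as)) ≫
        ((HomotopyCategory.quotient A (ComplexShape.up ℤ)).commShiftIso (1 : ℤ)).hom.app
          (truncGE1 X.as),
      ⟨⟨fun i => strunc_X_mem X.as _ P hP0 hP i, 1, max n₀ 1, fun i hi => ?_⟩,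
        1, fun i hi => isZero_strunc_X X.as _ (by omega)⟩,
      ⟨⟨fun i => strunc_X_mem X.as _ P hP0 hP i, min m₀ 0, 0, fun i hi => ?_⟩,
        0, fun i hi => isZero_strunc_X X.as _ (by omega)⟩,
      triangle_mem X.as⟩
    · rcases hi with hi | hi
      · exact exactAt_of_isZero _ (isZero_strunc_X X.as _ (by omega))
      · exact strunc_exactAt X.as _ (by omega) (by omega) (by omega)
          (hex i (Or.inr (by omega)))
    · rcases hi with hi | hi
      · exact strunc_exactAt X.as _ (by omega) (by omega) (by omega)
          (hex i (Or.inl (by omega)))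
      · exact exactAt_of_isZero _ (isZero_strunc_X X.as _ (by omega))
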